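/- The (1,2) block of exp([[A, C],[0, B]]) equals the integral ∫_0^1 exp(sA) C exp((1−s)B) ds. -/

import Mathlib

open Matrix NormedSpace

section auxLinfty

variable {d : Type*} [Fintype d] [DecidableEq d]

/-- slope form of derivative of `t ↦ exp (t • M)`, instance-free statement. -/
lemma exp_slope_aux (M : Matrix d d ℝ) (t : ℝ) :
    Filter.Tendsto (fun t' => (t' - t)⁻¹ • (exp (t' • M) - exp (t • M)))
      (nhdsWithin t {t}ᶜ) (nhds (exp (t • M) * M)) := by
  letI : NormedRing (Matrix d d ℝ) := Matrix.linftyOpNormedRing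
  letI : NormedAlgebra ℝ (Matrix d d ℝ) := Matrix.linftyOpNormedAlgebra
  have := hasDerivAt_iff_tendsto_slope.mp (hasDerivAt_exp_smul_const M t)
  simp only [slope_fun_def, vsub_eq_sub] at this
  exact this

lemma exp_neg_mul_exp (N : Matrix d d ℝ) : exp (-N) * exp N = 1 := by
  letI : NormedRing (Matrix d d ℝ) := Matrix.linftyOpNormedRing
  letI : NormedAlgebra ℝ (Matrix d d ℝ) := Matrix.linftyOpNormedAlgebra
  rw [← Matrix.exp_add_of_commute _ _ (Commute.neg_left (Commute.refl N)), neg_add_cancel]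
  exact exp_zero

lemma exp_sub_smul (B : Matrix d d ℝ) (s : ℝ) :
    exp ((1 - s) • B) = exp (-(s • B)) * exp ((1 : ℝ) • B) := by
  letI : NormedRing (Matrix d d ℝ) := Matrix.linftyOpNormedRing
  letI : NormedAlgebra ℝ (Matrix d d ℝ) := Matrix.linftyOpNormedAlgebra
  rw [← Matrix.exp_add_of_commute _ _ ((Commute.refl B).smul_left s |>.smul_right 1 |>.neg_left)]
  congr 1
  rw [sub_smul]
  abel

end auxLinfty

attribute [local instance] Matrix.normedAddCommGroup Matrix.normedSpace

section aux2

variable {a b c : Type*} [Fintype a] [Fintype b] [Fintype c]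

lemma hasDerivAt_matrix {f : ℝ → Matrix a b ℝ} {f' : Matrix a b ℝ} {t : ℝ} :
    HasDerivAt f f' t ↔ ∀ i j, HasDerivAt (fun t => f t i j) (f' i j) t := by
  exact hasDerivAt_pi.trans (forall_congr' fun i => hasDerivAt_pi)

lemma HasDerivAt.matrix_mul {F : ℝ → Matrix a b ℝ} {G : ℝ → Matrix b c ℝ}
    {F' : Matrix a b ℝ} {G' : Matrix b c ℝ} {t : ℝ}
    (hF : HasDerivAt F F' t) (hG : HasDerivAt G G' t) :
    HasDerivAt (fun t => F t * G t) (F' * G t + F t * G') t := by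
  rw [hasDerivAt_matrix] at hF hG ⊢
  intro i j
  simp only [Matrix.mul_apply, Matrix.add_apply]
  have h := HasDerivAt.fun_sum (fun k (_ : k ∈ Finset.univ) => (hF i k).mul (hG k j))
  rw [Finset.sum_add_distrib] at h
  exact h

lemma hasDerivAt_exp_smul (M : Matrix a a ℝ) [DecidableEq a] (t : ℝ) :
    HasDerivAt (fun u : ℝ => exp (u • M)) (exp (t • M) * M) t := by
  refine hasDerivAt_iff_tendsto_slope.mpr ?_
  have := exp_slope_aux M t
  simp only [slope_fun_def, vsub_eq_sub]
  exact this

lemma hasDerivAt_fromBlocks {b' c' : Type*} [Fintype b'] [Fintype c']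
    {f₁ : ℝ → Matrix a b ℝ} {f₂ : ℝ → Matrix a b' ℝ} {f₃ : ℝ → Matrix c' b ℝ}
    {f₄ : ℝ → Matrix c' b' ℝ} {g₁ g₂ g₃ g₄} {t : ℝ}
    (h₁ : HasDerivAt f₁ g₁ t) (h₂ : HasDerivAt f₂ g₂ t)
    (h₃ : HasDerivAt f₃ g₃ t) (h₄ : HasDerivAt f₄ g₄ t) :
    HasDerivAt (fun t => fromBlocks (f₁ t) (f₂ t) (f₃ t) (f₄ t))
      (fromBlocks g₁ g₂ g₃ g₄) t := by
  rw [hasDerivAt_matrix] at h₁ h₂ h₃ h₄ ⊢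
  rintro (i | i) (j | j) <;> simpa [fromBlocks] using by
    first
      | exact h₁ i j
      | exact h₂ i j
      | exact h₃ i j
      | exact h₄ i j

end aux2

/-- The (1,2) block of `exp [[A, C], [0, B]]` equals `∫_0^1 exp(sA) C exp((1-s)B) ds`. -/
theorem stmt_9 (m n : ℕ) (A : Matrix (Fin m) (Fin m) ℝ) (B : Matrix (Fin n) (Fin n) ℝ)
    (C : Matrix (Fin m) (Fin n) ℝ) :
    (exp (fromBlocks A C 0 B)).toBlocks₁₂ =
      ∫ s in (0 : ℝ)..1, exp (s • A) * C * exp ((1 - s) • B) := by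
  set M : Matrix (Fin m ⊕ Fin n) (Fin m ⊕ Fin n) ℝ := fromBlocks A C 0 B with hM
  set f : ℝ → Matrix (Fin m) (Fin n) ℝ :=
    fun s => exp (s • A) * C * exp (-(s • B)) with hf
  have hcA : Continuous fun s : ℝ => exp (s • A) :=
    continuous_iff_continuousAt.mpr fun t => (hasDerivAt_exp_smul A t).continuousAt
  have hcBneg : Continuous fun s : ℝ => exp (-(s • B)) := by
    have : Continuous fun s : ℝ => exp (s • (-B)) :=
      continuous_iff_continuousAt.mpr fun t => (hasDerivAt_exp_smul (-B) t).continuousAt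
    simpa [smul_neg] using this
  have hcf : Continuous f := (hcA.matrix_mul continuous_const).matrix_mul hcBneg
  -- the candidate (1,2) block
  set G : ℝ → Matrix (Fin m) (Fin n) ℝ :=
    fun t => (∫ s in (0:ℝ)..t, f s) * exp (t • B) with hG
  have : TopologicalSpace.PseudoMetrizableSpace (Matrix (Fin m) (Fin n) ℝ) :=
    inferInstanceAs (TopologicalSpace.PseudoMetrizableSpace (Fin m → Fin n → ℝ))
  have hintf : ∀ t : ℝ, HasDerivAt (fun u => ∫ s in (0:ℝ)..u, f s) (f t) t := fun t =>
    intervalIntegral.integral_hasDerivAt_right (hcf.intervalIntegrable _ _)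
      (hcf.stronglyMeasurableAtFilter _ _) hcf.continuousAt
  have hGd : ∀ t : ℝ, HasDerivAt G (exp (t • A) * C + G t * B) t := by
    intro t
    have h := (hintf t).matrix_mul (hasDerivAt_exp_smul B t)
    have e1 : f t * exp (t • B) = exp (t • A) * C := by
      rw [hf]
      simp only
      rw [Matrix.mul_assoc, exp_neg_mul_exp, Matrix.mul_one]
    have e2 : (∫ s in (0:ℝ)..t, f s) * (exp (t • B) * B) = G t * B := by
      show (∫ s in (0:ℝ)..t, f s) * (exp (t • B) * B)
        = (∫ s in (0:ℝ)..t, f s) * exp (t • B) * B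
      rw [Matrix.mul_assoc]
    rw [e1, e2] at h
    exact h
  -- X t := fromBlocks (exp (t•A)) (G t) 0 (exp (t•B))
  set X : ℝ → Matrix (Fin m ⊕ Fin n) (Fin m ⊕ Fin n) ℝ :=
    fun t => fromBlocks (exp (t • A)) (G t) 0 (exp (t • B)) with hX
  have hXd : ∀ t : ℝ, HasDerivAt X (X t * M) t := by
    intro t
    have h := hasDerivAt_fromBlocks (hasDerivAt_exp_smul A t) (hGd t)
      (hasDerivAt_const t (0 : Matrix (Fin n) (Fin m) ℝ)) (hasDerivAt_exp_smul B t)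
    have : X t * M = fromBlocks (exp (t • A) * A) (exp (t • A) * C + G t * B) 0
        (exp (t • B) * B) := by
      rw [hX, hM]
      simp [Matrix.fromBlocks_multiply]
    rw [this]
    exact h
  -- Y t := X t * exp (-(t • M)) has zero derivative
  set Y : ℝ → Matrix (Fin m ⊕ Fin n) (Fin m ⊕ Fin n) ℝ :=
    fun t => X t * exp (-(t • M)) with hY
  have hEd : ∀ t : ℝ, HasDerivAt (fun u : ℝ => exp (-(u • M)))
      (-(exp (-(t • M)) * M)) t := by
    intro t
    have h := hasDerivAt_exp_smul (-M) t
    simp only [smul_neg, mul_neg] at h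
    exact h
  have hYd : ∀ t : ℝ, HasDerivAt Y 0 t := by
    intro t
    have h := (hXd t).matrix_mul (hEd t)
    have hcomm : M * exp (-(t • M)) = exp (-(t • M)) * M :=
      (((Commute.refl M).smul_right t).neg_right).exp_right
    have : X t * M * exp (-(t • M)) + X t * -(exp (-(t • M)) * M) = 0 := by
      rw [mul_assoc, hcomm, mul_neg, add_neg_cancel]
    rwa [this] at h
  have hconst : Y 1 = Y 0 :=
    is_const_of_deriv_eq_zero (fun t => (hYd t).differentiableAt)
      (fun t => (hYd t).deriv) 1 0
  have hY0 : Y 0 = 1 := by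
    show X 0 * exp (-((0:ℝ) • M)) = 1
    have hX0 : X 0 = 1 := by
      show fromBlocks (exp ((0:ℝ) • A)) (G 0) 0 (exp ((0:ℝ) • B)) = 1
      have : G 0 = 0 := by
        show (∫ s in (0:ℝ)..(0:ℝ), f s) * exp ((0:ℝ) • B) = 0
        rw [intervalIntegral.integral_same, Matrix.zero_mul]
      rw [this]
      simp only [zero_smul, exp_zero]
      exact Matrix.fromBlocks_one
    rw [hX0, one_mul, zero_smul, neg_zero, exp_zero]
  have hX1 : X 1 = exp M := by
    have h1 : X 1 * exp (-M) = 1 := by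
      have h := hconst.trans hY0
      rw [hY] at h
      simpa using h
    calc X 1 = X 1 * (exp (-M) * exp M) := by rw [exp_neg_mul_exp, mul_one]
    _ = X 1 * exp (-M) * exp M := by rw [mul_assoc]
    _ = exp M := by rw [h1, one_mul]
  -- extract the block
  have hblock : (exp M).toBlocks₁₂ = G 1 := by
    rw [← hX1, hX]
    simp [Matrix.toBlocks_fromBlocks₁₂]
  rw [hblock, hG]
  -- rewrite the RHS integrand and pull the constant out
  have hint : ∀ s : ℝ, exp (s • A) * C * exp ((1 - s) • B)
      = f s * exp ((1:ℝ) • B) := by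
    intro s
    rw [hf]
    simp only
    rw [exp_sub_smul, ← Matrix.mul_assoc]
  simp only [hint]
  -- ∫ (f s * E) = (∫ f) * E via a continuous linear map
  set E := exp ((1:ℝ) • B)
  let L : Matrix (Fin m) (Fin n) ℝ →ₗ[ℝ] Matrix (Fin m) (Fin n) ℝ :=
    { toFun := fun X => X * E
      map_add' := fun X Y => Matrix.add_mul X Y E
      map_smul' := fun r X => Matrix.smul_mul r X E }
  have := (LinearMap.toContinuousLinearMap L).intervalIntegral_comp_comm (μ := MeasureTheory.volume)
    (hcf.intervalIntegrable 0 1)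
  exact this.symm
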